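/- arXiv:1403.4267 — 2 statements merged into one kernel-verified Lean document; each statement's English description precedes it below -/
import Mathlib

section
/- Let X be a Hermitian positive semidefinite matrix of size n×n with eigendecomposition X = E Λ E', where X = x x' for a nonzero vector x ∈ ℂⁿ, so Λ has a single nonzero eigenvalue ‖x‖² in the (1,1) position. Let Δ = E [[a, b'],[b, C]] E' with a ∈ ℂ, b ∈ ℂ^{n-1}, C Hermitian of size (n-1)×(n-1). Then there exists c₀ > 0 such that X + cΔ is positive semidefinite for all c ∈ (0, c₀] if and only if a ∈ ℝ, C is positive semidefinite, and b lies in the range of C. -/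
open scoped ComplexOrder Matrix
open Matrix ComplexInnerProductSpace

private lemma cmul_nonneg' {z w : ℂ} (hz : 0 ≤ z) (hw : 0 ≤ w) : 0 ≤ z * w := by
  rw [Complex.nonneg_iff] at hz hw ⊢
  constructor
  · simp only [Complex.mul_re, ← hz.2, ← hw.2, mul_zero, zero_mul, sub_zero]
    exact mul_nonneg hz.1 hw.1
  · simp [Complex.mul_im, ← hz.2, ← hw.2]

private lemma cdiv_nonneg' {c : ℝ} {z : ℂ} (hc : 0 < c) (h : 0 ≤ (c:ℂ) * z) : 0 ≤ z := by
  rw [Complex.nonneg_iff] at h ⊢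
  simp only [Complex.mul_re, Complex.mul_im, Complex.ofReal_re, Complex.ofReal_im,
    zero_mul, sub_zero, zero_add, mul_zero] at h
  constructor
  · exact nonneg_of_mul_nonneg_right h.1 hc
  · have h2 : c * z.im = 0 := by linarith [h.2]
    rcases mul_eq_zero.mp h2 with h' | h'
    · exact absurd h' hc.ne'
    · exact h'.symm

private lemma aux_conj_iff' {n : Type*} [Fintype n] [DecidableEq n]
    {E : Matrix n n ℂ} (hE : E ∈ Matrix.unitaryGroup n ℂ) (A : Matrix n n ℂ) :
    (E * A * Eᴴ).PosSemidef ↔ A.PosSemidef := by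
  have h1 : Eᴴ * E = 1 := by
    simpa [Matrix.star_eq_conjTranspose] using Matrix.mem_unitaryGroup_iff'.mp hE
  constructor
  · intro h
    have h2 := h.mul_mul_conjTranspose_same Eᴴ
    have h3 : Eᴴ * (E * A * Eᴴ) * Eᴴᴴ = A := by
      rw [conjTranspose_conjTranspose]
      calc Eᴴ * (E * A * Eᴴ) * E = (Eᴴ * E) * A * (Eᴴ * E) := by
            simp only [Matrix.mul_assoc]
        _ = A := by rw [h1, Matrix.one_mul, Matrix.mul_one]
    rwa [h3] at h2
  · intro h; exact h.mul_mul_conjTranspose_same E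

private lemma quad_form' {m : ℕ} (α : ℂ) (b : Fin m → ℂ) (C : Matrix (Fin m) (Fin m) ℂ)
    (t : ℂ) (u : Fin m → ℂ) :
    star (Sum.elim (fun _ => t) u) ⬝ᵥ
      ((Matrix.fromBlocks (fun _ _ => α) (fun _ j => star (b j)) (fun i _ => b i) C :
        Matrix (Fin 1 ⊕ Fin m) (Fin 1 ⊕ Fin m) ℂ)
        *ᵥ Sum.elim (fun _ => t) u)
    = (starRingEnd ℂ) t * t * α + (starRingEnd ℂ) t * (star b ⬝ᵥ u)
      + (star u ⬝ᵥ b) * t + star u ⬝ᵥ (C *ᵥ u) := by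
  rw [Function.star_sumElim]; erw [Matrix.fromBlocks_mulVec]; rw [sumElim_dotProduct_sumElim,
    dotProduct_add, dotProduct_add]
  have h1 : star (fun _ : Fin 1 => t) ⬝ᵥ (((fun _ _ => α) : Matrix (Fin 1) (Fin 1) ℂ) *ᵥ fun _ => t) = (starRingEnd ℂ) t * t * α := by
    simp [dotProduct, Matrix.mulVec, Fin.sum_univ_one]; ring
  have h2 : star (fun _ : Fin 1 => t) ⬝ᵥ (((fun _ j => star (b j)) : Matrix (Fin 1) (Fin m) ℂ) *ᵥ u) =
      (starRingEnd ℂ) t * (star b ⬝ᵥ u) := by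
    simp [dotProduct, Matrix.mulVec, Fin.sum_univ_one, Finset.mul_sum]
  have h3 : star u ⬝ᵥ (((fun i _ => b i) : Matrix (Fin m) (Fin 1) ℂ) *ᵥ fun _ : Fin 1 => t) = (star u ⬝ᵥ b) * t := by
    simp [dotProduct, Matrix.mulVec, Fin.sum_univ_one, Finset.sum_mul]; exact Finset.sum_congr rfl fun _ _ => by ring
  simp only [Sum.elim_comp_inl, Sum.elim_comp_inr]
  rw [h1, h2, h3]; ring

private lemma mem_range_of_orth' {m : ℕ} {C : Matrix (Fin m) (Fin m) ℂ}
    (hC : C.IsHermitian) {b : Fin m → ℂ}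
    (hb : ∀ u : Fin m → ℂ, C *ᵥ u = 0 → star b ⬝ᵥ u = 0) :
    ∃ w, C *ᵥ w = b := by
  classical
  set T := Matrix.toEuclideanLin C with hT
  have hTs : T.IsSymmetric := Matrix.isHermitian_iff_isSymmetric.mp hC
  set K := LinearMap.range T with hK
  set b' : EuclideanSpace ℂ (Fin m) := (WithLp.equiv 2 (Fin m → ℂ)).symm b with hb'
  obtain ⟨p, hp, r, hr, hsum⟩ := K.exists_add_mem_mem_orthogonal b'
  have hTr : T r = 0 := by
    have h0 : (inner ℂ (T (T r)) r : ℂ) = 0 := (Submodule.mem_orthogonal K r).mp hr _ ⟨T r, rfl⟩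
    exact inner_self_eq_zero.mp ((hTs (T r) r).symm.trans h0)
  have hCr : C *ᵥ (WithLp.equiv 2 (Fin m → ℂ)) r = 0 := by
    have := congrArg (WithLp.equiv 2 (Fin m → ℂ)) hTr
    simpa [hT, Matrix.toEuclideanLin_apply] using this
  have hbr : (inner ℂ b' r : ℂ) = 0 := by
    have := hb _ hCr
    simpa [hb', EuclideanSpace.inner_eq_star_dotProduct, dotProduct_comm] using this
  have hpr : (inner ℂ p r : ℂ) = 0 := (Submodule.mem_orthogonal K r).mp hr p hp
  have hrr : r = 0 := by
    have : (inner ℂ r r : ℂ) = 0 := by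
      have := congrArg (fun z => (inner ℂ z r : ℂ)) hsum
      simpa [inner_add_left, hpr, hbr] using this.symm
    exact inner_self_eq_zero.mp this
  have hbK : b' ∈ K := by rw [hsum, hrr, add_zero]; exact hp
  obtain ⟨w, hw⟩ := hbK
  refine ⟨(WithLp.equiv 2 (Fin m → ℂ)) w, ?_⟩
  have := congrArg (WithLp.equiv 2 (Fin m → ℂ)) hw
  simpa [hT, Matrix.toEuclideanLin_apply, hb'] using this

theorem stmt_0 (m : ℕ) (x : (Fin 1 ⊕ Fin m) → ℂ) (hx : x ≠ 0)
    (X : Matrix (Fin 1 ⊕ Fin m) (Fin 1 ⊕ Fin m) ℂ)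
    (hX : X = Matrix.vecMulVec x (star x))
    (E : Matrix (Fin 1 ⊕ Fin m) (Fin 1 ⊕ Fin m) ℂ)
    (hE : E ∈ Matrix.unitaryGroup (Fin 1 ⊕ Fin m) ℂ)
    (hXE : X = E * Matrix.fromBlocks
      (fun _ _ => ((∑ i, ‖x i‖ ^ 2 : ℝ) : ℂ)) 0 0 0 * Eᴴ)
    (a : ℂ) (b : Fin m → ℂ) (C : Matrix (Fin m) (Fin m) ℂ) (hC : C.IsHermitian)
    (Δ : Matrix (Fin 1 ⊕ Fin m) (Fin 1 ⊕ Fin m) ℂ)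
    (hΔ : Δ = E * Matrix.fromBlocks (fun _ _ => a) (fun _ j => star (b j))
      (fun i _ => b i) C * Eᴴ) :
    (∃ c₀ > 0, ∀ c ∈ Set.Ioc (0 : ℝ) c₀, (X + (c : ℂ) • Δ).PosSemidef) ↔
      (a.im = 0 ∧ C.PosSemidef ∧ ∃ w, C.mulVec w = b) := by
  classical
  set lr : ℝ := ∑ i, ‖x i‖ ^ 2 with hlrdef
  have hlr : 0 < lr := by
    obtain ⟨i, hi⟩ : ∃ i, x i ≠ 0 := by
      by_contra h; push_neg at h; exact hx (funext h)
    exact Finset.sum_pos' (fun j _ => by positivity)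
      ⟨i, Finset.mem_univ i, pow_pos (norm_pos_iff.mpr hi) 2⟩
  set D : Matrix (Fin 1 ⊕ Fin m) (Fin 1 ⊕ Fin m) ℂ :=
    Matrix.fromBlocks (fun _ _ => (lr : ℂ)) 0 0 0 with hD
  set M : Matrix (Fin 1 ⊕ Fin m) (Fin 1 ⊕ Fin m) ℂ :=
    Matrix.fromBlocks (fun _ _ => a) (fun _ j => star (b j)) (fun i _ => b i) C with hM
  have key : ∀ c : ℝ, (X + (c:ℂ) • Δ).PosSemidef ↔ (D + (c:ℂ) • M).PosSemidef := by
    intro c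
    have h1 : X + (c:ℂ) • Δ = E * (D + (c:ℂ) • M) * Eᴴ := by
      rw [hXE, hΔ, Matrix.mul_add, Matrix.add_mul, Matrix.mul_smul, Matrix.smul_mul]
    rw [h1]
    exact aux_conj_iff' hE _
  have hblock : ∀ c : ℝ, D + (c:ℂ) • M =
      Matrix.fromBlocks (fun _ _ => (lr:ℂ) + c * a) (fun _ j => star (((c:ℂ) • b) j))
        (fun i _ => ((c:ℂ) • b) i) ((c:ℂ) • C) := by
    intro c
    ext i j
    rcases i with i | i <;> rcases j with j | j <;>
      simp [hD, hM, Matrix.fromBlocks, Complex.conj_ofReal, mul_comm]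
  have hvdec : ∀ v : (Fin 1 ⊕ Fin m) → ℂ,
      v = Sum.elim (fun _ => v (Sum.inl 0)) (v ∘ Sum.inr) := by
    intro v; funext i
    rcases i with i | i
    · rw [Sum.elim_inl]; exact congrArg v (congrArg Sum.inl (Subsingleton.elim 0 i)).symm ▸ rfl
    · rfl
  have hquad : ∀ (c : ℝ) (t : ℂ) (u : Fin m → ℂ),
      star (Sum.elim (fun _ => t) u) ⬝ᵥ ((D + (c:ℂ) • M) *ᵥ Sum.elim (fun _ => t) u)
      = (starRingEnd ℂ) t * t * ((lr:ℂ) + c * a)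
        + (c:ℂ) * ((starRingEnd ℂ) t * (star b ⬝ᵥ u))
        + (c:ℂ) * ((star u ⬝ᵥ b) * t) + (c:ℂ) * (star u ⬝ᵥ (C *ᵥ u)) := by
    intro c t u
    rw [hblock c, quad_form']
    simp only [star_smul, Complex.star_def, Complex.conj_ofReal, smul_dotProduct,
      dotProduct_smul, Matrix.smul_mulVec, smul_eq_mul]
    ring
  constructor
  · rintro ⟨c₀, hc₀pos, hpsd⟩
    have hm : (D + (c₀:ℂ) • M).PosSemidef := (key c₀).mp (hpsd c₀ ⟨hc₀pos, le_refl c₀⟩)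
    have hval : ∀ (t : ℂ) (u : Fin m → ℂ), (0:ℂ) ≤ (starRingEnd ℂ) t * t * ((lr:ℂ) + c₀*a)
        + (c₀:ℂ) * ((starRingEnd ℂ) t * (star b ⬝ᵥ u)) + (c₀:ℂ)*((star u ⬝ᵥ b)*t)
        + (c₀:ℂ)*(star u ⬝ᵥ (C *ᵥ u)) := by
      intro t u
      have h := hm.dotProduct_mulVec_nonneg (Sum.elim (fun _ => t) u)
      rwa [hquad c₀ t u] at h
    have h1 : (0:ℂ) ≤ (lr:ℂ) + c₀ * a := by
      have h := hval 1 0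
      simpa using h
    have haim : a.im = 0 := by
      have h := (Complex.nonneg_iff.mp h1).2
      simp only [Complex.add_im, Complex.ofReal_im, Complex.mul_im, Complex.ofReal_re,
        Complex.ofReal_im, zero_mul, zero_add, add_zero] at h
      have h2 : c₀ * a.im = 0 := by linarith
      rcases mul_eq_zero.mp h2 with h' | h'
      · exact absurd h' hc₀pos.ne'
      · exact h'
    have hCpsd : C.PosSemidef := by
      refine Matrix.PosSemidef.of_dotProduct_mulVec_nonneg hC fun u => ?_
      have h := hval 0 u
      simp only [map_zero, zero_mul, mul_zero, zero_add, add_zero] at h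
      exact cdiv_nonneg' hc₀pos h
    refine ⟨haim, hCpsd, ?_⟩
    apply mem_range_of_orth' hC
    intro u hu
    by_contra hs
    set s : ℂ := star b ⬝ᵥ u with hsdef
    have hub : star u ⬝ᵥ b = (starRingEnd ℂ) s := by
      simp only [hsdef, dotProduct, _root_.map_sum, _root_.map_mul, Complex.conj_conj,
        Pi.star_apply, Complex.star_def]
      exact Finset.sum_congr rfl fun i _ => mul_comm _ _
    have hP : 0 ≤ lr + c₀ * a.re := by
      have := (Complex.nonneg_iff.mp h1).1
      simpa [Complex.add_re, Complex.mul_re, haim] using this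
    set P : ℝ := lr + c₀ * a.re with hPdef
    set ε : ℝ := c₀ / (P + 1) with hεdef
    have hεpos : 0 < ε := by positivity
    have hS : 0 < Complex.normSq s := Complex.normSq_pos.mpr hs
    have ha : a = ((a.re : ℝ) : ℂ) := Complex.ext (by simp) (by simp [haim])
    have h := hval (-(ε:ℂ) * s) u
    rw [hu, dotProduct_zero, mul_zero, add_zero, hub, ha] at h
    have hvc : (starRingEnd ℂ) (-(ε:ℂ) * s) * (-(ε:ℂ) * s) * ((lr:ℂ) + c₀*((a.re:ℝ):ℂ))
        + (c₀:ℂ) * ((starRingEnd ℂ) (-(ε:ℂ) * s) * s)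
        + (c₀:ℂ) * ((starRingEnd ℂ) s * (-(ε:ℂ) * s))
        = ((Complex.normSq s * (ε^2 * P - 2*c₀*ε) : ℝ) : ℂ) := by
      have hss : (starRingEnd ℂ) s * s = ((Complex.normSq s : ℝ) : ℂ) := by
        rw [mul_comm, Complex.mul_conj]
      simp only [_root_.map_mul, map_neg, Complex.conj_ofReal]
      push_cast [hPdef]
      linear_combination ((ε:ℂ)^2 * ((lr:ℂ) + c₀*(a.re:ℂ)) - 2*c₀*(ε:ℂ)) * hss
    rw [hvc, Complex.zero_le_real] at h
    have hre' : 0 ≤ Complex.normSq s * (ε^2 * P - 2*c₀*ε) := h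
    have hεP : ε * P < c₀ := by
      rw [hεdef]
      rw [div_mul_eq_mul_div, div_lt_iff₀ (by linarith)]
      nlinarith
    nlinarith [mul_pos hεpos (mul_pos hS hεpos)]
  · rintro ⟨haim, hCpsd, w, hw⟩
    have ha : a = ((a.re : ℝ) : ℂ) := Complex.ext (by simp) (by simp [haim])
    have hμc0 := hCpsd.dotProduct_mulVec_nonneg w
    set μ : ℝ := (star w ⬝ᵥ (C *ᵥ w)).re with hμdef
    have hμc : star w ⬝ᵥ (C *ᵥ w) = (μ:ℂ) :=
      Complex.ext (by simp [hμdef]) (by simp [hμdef, ← (Complex.nonneg_iff.mp hμc0).2])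
    have hμ0 : 0 ≤ μ := (Complex.nonneg_iff.mp hμc0).1
    set Kk : ℝ := |a.re - μ| with hKk
    refine ⟨lr / (Kk + 1), by positivity, fun c hc => ?_⟩
    obtain ⟨hc0, hc1⟩ := hc
    rw [key c]
    have hbu : ∀ u : Fin m → ℂ, star b ⬝ᵥ u = star w ⬝ᵥ (C *ᵥ u) := by
      intro u
      rw [Matrix.dotProduct_mulVec, ← hC.eq, ← Matrix.star_mulVec, hw]
    have hwb : star w ⬝ᵥ b = (μ:ℂ) := by rw [← hw, hμc]
    refine Matrix.PosSemidef.of_dotProduct_mulVec_nonneg ?_ ?_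
    · -- Hermitian
      have hDh : D.IsHermitian := by
        show Dᴴ = D
        ext i j
        rcases i with i | i <;> rcases j with j | j <;>
          simp [hD, Matrix.fromBlocks, Matrix.conjTranspose_apply, Complex.conj_ofReal]
      have hMh : M.IsHermitian := by
        show Mᴴ = M
        ext i j
        rcases i with i | i <;> rcases j with j | j <;>
          simp [hM, Matrix.fromBlocks, Matrix.conjTranspose_apply, hC.apply]
        · exact Complex.conj_eq_iff_im.mpr haim
      have : ((c:ℂ) • M).IsHermitian := by
        show ((c:ℂ) • M)ᴴ = (c:ℂ) • M
        rw [Matrix.conjTranspose_smul, hMh.eq, Complex.star_def, Complex.conj_ofReal]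
      exact hDh.add this
    · intro v
      set t : ℂ := v (Sum.inl 0) with ht
      set u : Fin m → ℂ := v ∘ Sum.inr with hu
      rw [show v = Sum.elim (fun _ => t) u from hvdec v, hquad c t u]
      have hid : (starRingEnd ℂ) t * t * ((lr:ℂ) + c * a)
          + (c:ℂ) * ((starRingEnd ℂ) t * (star b ⬝ᵥ u))
          + (c:ℂ) * ((star u ⬝ᵥ b) * t) + (c:ℂ) * (star u ⬝ᵥ (C *ᵥ u))
          = ((lr:ℂ) + c*a - c*(μ:ℂ)) * ((starRingEnd ℂ) t * t)
            + (c:ℂ) * (star (u + t • w) ⬝ᵥ (C *ᵥ (u + t • w))) := by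
        rw [Matrix.mulVec_add, Matrix.mulVec_smul, hw]
        simp only [star_add, star_smul, add_dotProduct, smul_dotProduct,
          dotProduct_add, dotProduct_smul, smul_eq_mul, Complex.star_def]
        rw [hwb, ← hbu u]
        ring
      rw [hid]
      apply add_nonneg
      · apply cmul_nonneg'
        · have hcast : (lr:ℂ) + c*a - c*(μ:ℂ) = ((lr + c*(a.re - μ) : ℝ) : ℂ) := by
            apply Complex.ext
            · simp [Complex.add_re, Complex.sub_re, Complex.mul_re]; ring
            · simp [Complex.add_im, Complex.sub_im, Complex.mul_im, haim]
          rw [hcast, Complex.zero_le_real]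
          have habs : -Kk ≤ a.re - μ := by rw [hKk]; exact neg_abs_le _
          have h2 : c * Kk ≤ lr * Kk / (Kk + 1) := by
            rw [hKk] at *
            apply (mul_le_mul_of_nonneg_right hc1 (abs_nonneg _)).trans
            rw [div_mul_eq_mul_div]
          have h3 : lr * Kk / (Kk + 1) < lr := by
            rw [div_lt_iff₀ (by positivity)]
            nlinarith [abs_nonneg (a.re - μ)]
          nlinarith [mul_le_mul_of_nonneg_left habs hc0.le]
        · rw [mul_comm, Complex.mul_conj, Complex.zero_le_real]
          exact Complex.normSq_nonneg t
      · apply cmul_nonneg'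
        · exact Complex.zero_le_real.mpr hc0.le
        · exact hCpsd.dotProduct_mulVec_nonneg _
end

section
/- For a complex number D, the right derivative at c = 0 of c ↦ |0 + cD| = c|D| (for c ≥ 0) equals |D|; combined with the previous fact, for any complex matrices X, Δ ∈ ℂ^{n×n}, the one-sided directional derivative of the entrywise ℓ1 norm satisfies lim_{c→0⁺} (‖X + cΔ‖₁ − ‖X‖₁)/c = ‖Δ_{Ω_X^⊥}‖₁ + Re⟨sign(X), Δ_{Ω_X}⟩, where Ω_X is the support of X. -/
open scoped Topology

/-- Complex sign: z/|z| for z ≠ 0, and 0 at 0. -/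
noncomputable def csign (z : ℂ) : ℂ := if z = 0 then 0 else z / ((‖z‖ : ℝ) : ℂ)

/-- Entrywise ℓ1 norm of a complex matrix. -/
noncomputable def matL1 {n : ℕ} (M : Matrix (Fin n) (Fin n) ℂ) : ℝ :=
  ∑ i, ∑ j, ‖M i j‖

/-- Projection onto the support of X. -/
noncomputable def projOn {n : ℕ} (X Z : Matrix (Fin n) (Fin n) ℂ) : Matrix (Fin n) (Fin n) ℂ :=
  Matrix.of fun i j => if X i j = 0 then 0 else Z i j

/-- Projection onto the off-support of X. -/
noncomputable def projOff {n : ℕ} (X Z : Matrix (Fin n) (Fin n) ℂ) : Matrix (Fin n) (Fin n) ℂ :=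
  Matrix.of fun i j => if X i j = 0 then Z i j else 0

lemma entry_tendsto (x d : ℂ) :
    Filter.Tendsto (fun c : ℝ => (‖x + c * d‖ - ‖x‖) / c) (𝓝[>] 0)
      (𝓝 (if x = 0 then ‖d‖ else (star (csign x) * d).re)) := by
  by_cases hx : x = 0
  · simp only [hx, if_pos rfl, zero_add, norm_zero, sub_zero, ↓reduceIte]
    apply Filter.Tendsto.congr' ?_ tendsto_const_nhds
    filter_upwards [self_mem_nhdsWithin] with c (hc : 0 < c)
    rw [norm_mul, Complex.norm_real, Real.norm_eq_abs, abs_of_pos hc]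
    field_simp
  · rw [if_neg hx]
    set R := (star x * d).re with hR
    have habs : (0:ℝ) < ‖x‖ := norm_pos_iff.mpr hx
    have hval : (star (csign x) * d).re = R / ‖x‖ := by
      simp only [csign, if_neg hx]
      rw [show (star (x / (‖x‖ : ℂ))) = star x / (‖x‖ : ℂ) by
        rw [star_div₀]; norm_num]
      rw [div_mul_eq_mul_div, Complex.div_ofReal_re, hR]
    rw [hval]
    have key : ∀ c : ℝ, (‖x + c * d‖)^2
        = (‖x‖)^2 + c * (2 * R + c * (‖d‖)^2) := by
      intro c
      simp only [Complex.sq_norm, Complex.normSq_apply, Complex.add_re, Complex.add_im,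
        Complex.mul_re, Complex.mul_im, Complex.ofReal_re, Complex.ofReal_im, hR,
        Complex.star_def, Complex.conj_re, Complex.conj_im]
      ring
    have hcont : Filter.Tendsto
        (fun c : ℝ => (2 * R + c * (‖d‖)^2) / (‖x + c * d‖ + ‖x‖))
        (𝓝[>] 0) (𝓝 (R / ‖x‖)) := by
      have h1 : Filter.Tendsto (fun c : ℝ => (2 * R + c * (‖d‖)^2) /
          (‖x + c * d‖ + ‖x‖)) (𝓝 0)
          (𝓝 ((2 * R + 0 * (‖d‖)^2) / (‖x + (0:ℝ) * d‖ + ‖x‖))) := by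
        have hc1 : Continuous fun c : ℝ => 2 * R + c * (‖d‖)^2 := by continuity
        have hc2 : Continuous fun c : ℝ => ‖x + ↑c * d‖ + ‖x‖ := by
          continuity
        refine (hc1.tendsto 0).div (hc2.tendsto 0) (ne_of_gt ?_)
        have h0 : (0:ℝ) ≤ ‖x + ((0:ℝ):ℂ) * d‖ := norm_nonneg _
        linarith
      have h2 : ((2 * R + 0 * (‖d‖)^2) / (‖x + (0:ℝ) * d‖ + ‖x‖))
          = R / ‖x‖ := by
        simp; ring
      rw [h2] at h1
      exact h1.mono_left nhdsWithin_le_nhds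
    apply Filter.Tendsto.congr' ?_ hcont
    filter_upwards [self_mem_nhdsWithin] with c (hc : 0 < c)
    have hden : ‖x + c * d‖ + ‖x‖ ≠ 0 := by positivity
    field_simp
    nlinarith [key c]

theorem stmt_4 (n : ℕ) (D : ℂ) (X Δ : Matrix (Fin n) (Fin n) ℂ) :
    Filter.Tendsto (fun c : ℝ => ‖(0 : ℂ) + c * D‖ / c) (𝓝[>] 0)
      (𝓝 ‖D‖) ∧
    Filter.Tendsto (fun c : ℝ => (matL1 (X + (c : ℂ) • Δ) - matL1 X) / c)
      (𝓝[>] 0)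
      (𝓝 (matL1 (projOff X Δ) +
        (∑ i, ∑ j, star (csign (X i j)) * (projOn X Δ) i j).re)) := by
  constructor
  · apply Filter.Tendsto.congr' ?_ tendsto_const_nhds
    filter_upwards [self_mem_nhdsWithin] with c (hc : 0 < c)
    rw [zero_add, norm_mul, Complex.norm_real, Real.norm_eq_abs, abs_of_pos hc]
    field_simp
  · have htarget : matL1 (projOff X Δ) +
        (∑ i, ∑ j, star (csign (X i j)) * (projOn X Δ) i j).re
        = ∑ i, ∑ j, (if X i j = 0 then ‖Δ i j‖
            else (star (csign (X i j)) * Δ i j).re) := by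
      simp only [matL1, projOff, projOn, Matrix.of_apply, Complex.re_sum]
      rw [← Finset.sum_add_distrib]
      refine Finset.sum_congr rfl fun i _ => ?_
      rw [← Finset.sum_add_distrib]
      refine Finset.sum_congr rfl fun j _ => ?_
      by_cases h : X i j = 0 <;> simp [h, csign]
    rw [htarget]
    have hfun : ∀ c : ℝ, (matL1 (X + (c:ℂ) • Δ) - matL1 X) / c
        = ∑ i, ∑ j, (‖X i j + c * Δ i j‖ - ‖X i j‖) / c := by
      intro c
      simp only [matL1, Matrix.add_apply, Matrix.smul_apply, smul_eq_mul,
        ← Finset.sum_sub_distrib, ← Finset.sum_div]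
    simp only [hfun]
    exact tendsto_finset_sum _ fun i _ => tendsto_finset_sum _ fun j _ =>
      entry_tendsto (X i j) (Δ i j)
end
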